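/- arXiv:1709.03701 — 9 statements merged into one kernel-verified Lean document; each statement's English description precedes it below -/
import Mathlib

section
/- Let k ≥ 1 and let B be a finite family of closed real intervals [a,b] with a < b such that all endpoints of intervals in B are pairwise distinct, and let B = B_1 ∪ ... ∪ B_k be a partition where each B_j is proper. Let D be the set of all endpoints of intervals of B, and define a binary relation ≤^P on the disjoint union P = D ⊔ B by: (i) for d_1, d_2 ∈ D, d_1 ≤^P d_2 iff d_1 ≤ d_2 as real numbers; (ii) for intervals t_1 = [a_1,b_1], t_2 = [a_2,b_2] ∈ B, t_1 ≤^P t_2 iff t_1 = t_2, or b_1 < a_2, or t_1 and t_2 lie in the same part B_j and a_1 < a_2; (iii) for t = [a,b] ∈ B and d ∈ D, t ≤^P d iff b ≤ d, and d ≤^P t iff d ≤ a. Then ≤^P is a partial order on P. -/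
/-- The order relation `≤^P` on the disjoint union `ℝ ⊕ (ℝ × ℝ)` of endpoints and
intervals, where `f` assigns each interval its part of the partition:
(i) endpoints are ordered as real numbers;
(ii) an interval `t₁ = [a₁,b₁]` is below `t₂ = [a₂,b₂]` iff `t₁ = t₂`, or `b₁ < a₂`, or
    `t₁, t₂` lie in the same part and `a₁ < a₂`;
(iii) `t = [a,b]` is below an endpoint `d` iff `b ≤ d`, and `d` is below `t` iff `d ≤ a`. -/
def relP {k : ℕ} (f : ℝ × ℝ → Fin k) : (ℝ ⊕ ℝ × ℝ) → (ℝ ⊕ ℝ × ℝ) → Prop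
  | .inl d₁, .inl d₂ => d₁ ≤ d₂
  | .inr t₁, .inr t₂ => t₁ = t₂ ∨ t₁.2 < t₂.1 ∨ (f t₁ = f t₂ ∧ t₁.1 < t₂.1)
  | .inr t, .inl d => t.2 ≤ d
  | .inl d, .inr t => d ≤ t.1

/-- The ground set `P = D ⊔ B`: the left summand consists of the endpoints of
intervals of `B`, the right summand of the intervals of `B` themselves. -/
def carrierP (B : Finset (ℝ × ℝ)) : Set (ℝ ⊕ ℝ × ℝ) :=
  {x | Sum.elim (fun d => ∃ p ∈ B, p.1 = d ∨ p.2 = d) (fun t => t ∈ B) x}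

/-- For a finite family `B` of closed intervals `[a,b]`, `a < b`, with
pairwise distinct endpoints, partitioned by `f` into `k` proper parts, the relation
`≤^P` is a partial order (reflexive, transitive, antisymmetric) on `P = D ⊔ B`. -/
theorem relP_isPartialOrder
    (k : ℕ) (hk : 1 ≤ k) (B : Finset (ℝ × ℝ))
    (hB : ∀ p ∈ B, p.1 < p.2)
    (hdist : ∀ p ∈ B, ∀ q ∈ B, p ≠ q →
      p.1 ≠ q.1 ∧ p.1 ≠ q.2 ∧ p.2 ≠ q.1 ∧ p.2 ≠ q.2)
    (f : ℝ × ℝ → Fin k)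
    (hproper : ∀ p ∈ B, ∀ q ∈ B, f p = f q →
      Set.Icc p.1 p.2 ⊆ Set.Icc q.1 q.2 → p = q) :
    (∀ x ∈ carrierP B, relP f x x) ∧
    (∀ x ∈ carrierP B, ∀ y ∈ carrierP B, ∀ z ∈ carrierP B,
        relP f x y → relP f y z → relP f x z) ∧
    (∀ x ∈ carrierP B, ∀ y ∈ carrierP B, relP f x y → relP f y x → x = y) := by
  -- key monotonicity: in a proper part, left endpoints and right endpoints move together
  have mono : ∀ p ∈ B, ∀ q ∈ B, f p = f q → p.1 < q.1 → p.2 ≤ q.2 := by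
    intro p hp q hq hf hlt
    by_contra h
    push_neg at h
    have : q = p := hproper q hq p hp hf.symm
      (fun x hx => ⟨le_trans hlt.le hx.1, le_trans hx.2 h.le⟩)
    exact absurd hlt (by simp [this])
  refine ⟨?_, ?_, ?_⟩
  · rintro (d | t) hx
    · exact le_refl d
    · exact Or.inl rfl
  · rintro (d₁ | t₁) hx (d₂ | t₂) hy (d₃ | t₃) hz hxy hyz
    · exact le_trans hxy hyz
    · -- d₁ ≤ d₂ ≤ t₃.1
      exact le_trans hxy hyz
    · -- d₁ ≤ t₂.1 < t₂.2 ≤ d₃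
      exact le_trans hxy (le_trans (hB t₂ hy).le hyz)
    · -- d₁ ≤ t₂.1, t₂ rel t₃
      rcases hyz with rfl | h | ⟨_, h⟩
      · exact hxy
      · exact le_trans hxy (le_trans (hB t₂ hy).le h.le)
      · exact le_trans hxy h.le
    · -- t₁.2 ≤ d₂ ≤ d₃
      exact le_trans hxy hyz
    · -- t₁.2 ≤ d₂ ≤ t₃.1 : conclude t₁ rel t₃
      have hle : t₁.2 ≤ t₃.1 := le_trans hxy hyz
      have hne : t₁ ≠ t₃ := by
        rintro rfl
        exact absurd hle (not_le.mpr (hB t₁ hx))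
      exact Or.inr (Or.inl (lt_of_le_of_ne hle (hdist t₁ hx t₃ hz hne).2.2.1))
    · -- t₁ rel t₂, t₂.2 ≤ d₃
      rcases hxy with rfl | h | ⟨hf, h⟩
      · exact hyz
      · exact le_trans (le_trans h.le (hB t₂ hy).le) hyz
      · exact le_trans (mono t₁ hx t₂ hy hf h) hyz
    · -- t₁ rel t₂ rel t₃
      rcases hxy with rfl | h | ⟨hf, h⟩
      · exact hyz
      · rcases hyz with rfl | h' | ⟨_, h'⟩
        · exact Or.inr (Or.inl h)
        · exact Or.inr (Or.inl (lt_trans h (lt_trans (hB t₂ hy) h')))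
        · exact Or.inr (Or.inl (lt_trans h h'))
      · rcases hyz with rfl | h' | ⟨hf', h'⟩
        · exact Or.inr (Or.inr ⟨hf, h⟩)
        · exact Or.inr (Or.inl (lt_of_le_of_lt (mono t₁ hx t₂ hy hf h) h'))
        · exact Or.inr (Or.inr ⟨hf.trans hf', lt_trans h h'⟩)
  · rintro (d₁ | t₁) hx (d₂ | t₂) hy hxy hyx
    · exact congrArg Sum.inl (le_antisymm hxy hyx)
    · -- d₁ ≤ t₂.1 and t₂.2 ≤ d₁ : impossible
      exact absurd (lt_of_lt_of_le (hB t₂ hy) hyx) (not_lt.mpr hxy)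
    · exact absurd (lt_of_lt_of_le (hB t₁ hx) hxy) (not_lt.mpr hyx)
    · rcases hxy with rfl | h | ⟨hf, h⟩
      · rfl
      · rcases hyx with rfl | h' | ⟨_, h'⟩
        · rfl
        · exact absurd (lt_trans (lt_trans h (hB t₂ hy)) h') (not_lt.mpr (hB t₁ hx).le)
        · exact absurd (lt_trans (lt_trans h' (hB t₁ hx)) h) (not_lt.mpr le_rfl)
      · rcases hyx with rfl | h' | ⟨_, h'⟩
        · rfl
        · exact absurd (lt_trans (lt_trans h' h) (hB t₂ hy)) (not_lt.mpr le_rfl)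
        · exact absurd (lt_trans h h') (not_lt.mpr le_rfl)
end

section
/- Let k ≥ 1 and let B be a finite family of closed real intervals with pairwise distinct endpoints, partitioned as B = B_1 ∪ ... ∪ B_k with each B_j proper, let D be the set of all endpoints, and let ≤^P be the partial order on P = D ⊔ B defined by: (i) for d_1, d_2 ∈ D, d_1 ≤^P d_2 iff d_1 ≤ d_2; (ii) for t_1 = [a_1,b_1], t_2 = [a_2,b_2] ∈ B, t_1 ≤^P t_2 iff t_1 = t_2, or b_1 < a_2, or t_1, t_2 lie in the same part B_j and a_1 < a_2; (iii) for t = [a,b] ∈ B and d ∈ D, t ≤^P d iff b ≤ d, and d ≤^P t iff d ≤ a. Then D and each B_j are chains of (P, ≤^P); consequently every antichain of (P, ≤^P) has at most k+1 elements (the poset has width at most k+1). -/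
/-- In the poset `(P, ≤^P)` built from a `k`-fold proper interval
family `B` with pairwise distinct endpoints, the endpoint set `D` is a chain and each
part `B_j` is a chain; consequently every antichain has at most `k + 1` elements. -/
theorem relP_chains_and_width
    (k : ℕ) (hk : 1 ≤ k) (B : Finset (ℝ × ℝ))
    (hB : ∀ p ∈ B, p.1 < p.2)
    (hdist : ∀ p ∈ B, ∀ q ∈ B, p ≠ q →
      p.1 ≠ q.1 ∧ p.1 ≠ q.2 ∧ p.2 ≠ q.1 ∧ p.2 ≠ q.2)
    (f : ℝ × ℝ → Fin k)
    (hproper : ∀ p ∈ B, ∀ q ∈ B, f p = f q →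
      Set.Icc p.1 p.2 ⊆ Set.Icc q.1 q.2 → p = q) :
    (∀ d₁ d₂ : ℝ, (∃ p ∈ B, p.1 = d₁ ∨ p.2 = d₁) → (∃ p ∈ B, p.1 = d₂ ∨ p.2 = d₂) →
        relP f (.inl d₁) (.inl d₂) ∨ relP f (.inl d₂) (.inl d₁)) ∧
    (∀ j : Fin k, ∀ t₁ ∈ B, ∀ t₂ ∈ B, f t₁ = j → f t₂ = j →
        relP f (.inr t₁) (.inr t₂) ∨ relP f (.inr t₂) (.inr t₁)) ∧
    (∀ A : Finset (ℝ ⊕ ℝ × ℝ), ↑A ⊆ carrierP B →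
        (∀ x ∈ A, ∀ y ∈ A, x ≠ y → ¬ relP f x y ∧ ¬ relP f y x) →
        A.card ≤ k + 1) := by
  refine ⟨?_, ?_, ?_⟩
  · intro d₁ d₂ _ _
    simp only [relP]
    exact le_total d₁ d₂
  · intro j t₁ h₁ t₂ h₂ hf₁ hf₂
    by_cases h : t₁ = t₂
    · exact Or.inl (Or.inl h)
    · rcases lt_or_gt_of_ne ((hdist t₁ h₁ t₂ h₂ h).1) with hlt | hgt
      · exact Or.inl (Or.inr (Or.inr ⟨hf₁.trans hf₂.symm, hlt⟩))
      · exact Or.inr (Or.inr (Or.inr ⟨hf₂.trans hf₁.symm, hgt⟩))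
  · intro A hA hanti
    have hcard : A.card ≤ (Finset.univ : Finset (Option (Fin k))).card := by
      apply Finset.card_le_card_of_injOn
        (fun x => Sum.elim (fun _ => (none : Option (Fin k))) (fun t => some (f t)) x)
      · intros; simp
      · intro x hx y hy hxy
        by_contra hne
        obtain ⟨h1, h2⟩ := hanti x hx y hy hne
        match x, y with
        | .inl d₁, .inl d₂ =>
          exact (le_total d₁ d₂).elim h1 h2
        | .inl _, .inr _ => simp at hxy
        | .inr _, .inl _ => simp at hxy
        | .inr t₁, .inr t₂ =>
          simp only [Sum.elim_inr, Option.some.injEq] at hxy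
          have hne' : t₁ ≠ t₂ := fun h => hne (by rw [h])
          have hb₁ : t₁ ∈ B := by
            have := hA hx; simpa [carrierP] using this
          have hb₂ : t₂ ∈ B := by
            have := hA hy; simpa [carrierP] using this
          rcases lt_or_gt_of_ne ((hdist t₁ hb₁ t₂ hb₂ hne').1) with hlt | hgt
          · exact h1 (Or.inr (Or.inr ⟨hxy, hlt⟩))
          · exact h2 (Or.inr (Or.inr ⟨hxy.symm, hgt⟩))
    simpa using hcard
end

section
/- Let k ≥ 1 and let B be a finite family of closed real intervals with pairwise distinct endpoints, partitioned as B = B_1 ∪ ... ∪ B_k with each B_j proper, let D be the set of all endpoints, and let ≤^P be the partial order on P = D ⊔ B defined by: (i) for d_1, d_2 ∈ D, d_1 ≤^P d_2 iff d_1 ≤ d_2; (ii) for t_1 = [a_1,b_1], t_2 = [a_2,b_2] ∈ B, t_1 ≤^P t_2 iff t_1 = t_2, or b_1 < a_2, or t_1, t_2 lie in the same part B_j and a_1 < a_2; (iii) for t = [a,b] ∈ B and d ∈ D, t ≤^P d iff b ≤ d, and d ≤^P t iff d ≤ a. Then for all intervals x, y ∈ B: x ∩ y ≠ ∅ if and only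 if there is no endpoint z ∈ D with (x ≤^P z and z ≤^P y) or (y ≤^P z and z ≤^P x). -/
/-- In the poset `(P, ≤^P)` built from a `k`-fold proper interval
family `B` with pairwise distinct endpoints, two intervals `x, y ∈ B` intersect if and
only if there is no endpoint `z ∈ D` lying between them in the order `≤^P`
(the formula `ψ` of Gajarský et al.). -/
theorem relP_defines_intersection
    (k : ℕ) (hk : 1 ≤ k) (B : Finset (ℝ × ℝ))
    (hB : ∀ p ∈ B, p.1 < p.2)
    (hdist : ∀ p ∈ B, ∀ q ∈ B, p ≠ q →
      p.1 ≠ q.1 ∧ p.1 ≠ q.2 ∧ p.2 ≠ q.1 ∧ p.2 ≠ q.2)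
    (f : ℝ × ℝ → Fin k)
    (hproper : ∀ p ∈ B, ∀ q ∈ B, f p = f q →
      Set.Icc p.1 p.2 ⊆ Set.Icc q.1 q.2 → p = q) :
    ∀ x ∈ B, ∀ y ∈ B,
      (Set.Icc x.1 x.2 ∩ Set.Icc y.1 y.2).Nonempty ↔
      ¬ ∃ z : ℝ, (∃ p ∈ B, p.1 = z ∨ p.2 = z) ∧
          ((relP f (.inr x) (.inl z) ∧ relP f (.inl z) (.inr y)) ∨
           (relP f (.inr y) (.inl z) ∧ relP f (.inl z) (.inr x))) := by
  intro x hx y hy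
  constructor
  · rintro ⟨c, hc1, hc2⟩ ⟨z, hz, ⟨h1, h2⟩ | ⟨h1, h2⟩⟩
    · have h1' : x.2 ≤ z := h1
      have h2' : z ≤ y.1 := h2
      have heq : x.2 = y.1 := le_antisymm (h1'.trans h2') (hc2.1.trans hc1.2)
      by_cases hxy : x = y
      · subst hxy; exact absurd heq (ne_of_gt (hB x hx))
      · exact (hdist x hx y hy hxy).2.2.1 heq
    · have h1' : y.2 ≤ z := h1
      have h2' : z ≤ x.1 := h2
      have heq : y.2 = x.1 := le_antisymm (h1'.trans h2') (hc1.1.trans hc2.2)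
      by_cases hxy : y = x
      · subst hxy; exact absurd heq (ne_of_gt (hB y hy))
      · exact (hdist y hy x hx hxy).2.2.1 heq
  · intro h
    by_contra hne
    rw [Set.not_nonempty_iff_eq_empty, Set.Icc_inter_Icc, Set.Icc_eq_empty_iff] at hne
    push_neg at hne
    rcases lt_or_ge x.2 y.1 with hlt | hle
    · exact h ⟨x.2, ⟨x, hx, Or.inr rfl⟩, Or.inl ⟨le_refl _, le_of_lt hlt⟩⟩
    · have : min x.2 y.2 < max x.1 y.1 := hne
      have hlt2 : y.2 < x.1 := by
        rcases max_cases x.1 y.1 with ⟨hm, _⟩ | ⟨hm, _⟩ <;>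
          rcases min_cases x.2 y.2 with ⟨hn, _⟩ | ⟨hn, _⟩ <;>
          rw [hm, hn] at this <;>
          first
            | exact this
            | exact absurd this (not_lt.mpr (le_of_lt (hB x hx)))
            | exact absurd this (not_lt.mpr (le_of_lt (hB y hy)))
            | exact absurd this (not_lt.mpr hle)
      exact h ⟨y.2, ⟨y, hy, Or.inr rfl⟩, Or.inr ⟨le_refl _, le_of_lt hlt2⟩⟩
end

section
/- Let k ≥ 1 and let B be a finite family of closed real intervals with pairwise distinct endpoints, partitioned as B = B_1 ∪ ... ∪ B_k with each B_j proper, let D be the set of all endpoints, and let ≤^P be the partial order on P = D ⊔ B defined by: (i) for d_1, d_2 ∈ D, d_1 ≤^P d_2 iff d_1 ≤ d_2; (ii) for t_1 = [a_1,b_1], t_2 = [a_2,b_2] ∈ B, t_1 ≤^P t_2 iff t_1 = t_2, or b_1 < a_2, or t_1, t_2 lie in the same part B_j and a_1 < a_2; (iii) for t = [a,b] ∈ B and d ∈ D, t ≤^P d iff b ≤ d, and d ≤^P t iff d ≤ a. Then for all intervals x, y ∈ B: x ⊆ y if and only if for every endpoint z ∈ D, (z ≤^P y implies z ≤^P x)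 and (y ≤^P z implies x ≤^P z). -/
/-- In the poset `(P, ≤^P)` built from a `k`-fold proper interval
family `B` with pairwise distinct endpoints, an interval `x ∈ B` is contained in an
interval `y ∈ B` if and only if every endpoint `z ∈ D` below `y` is below `x` and every
endpoint `z ∈ D` above `y` is above `x` (the formula `ϑ` of Gajarský et al.). -/
theorem relP_defines_containment
    (k : ℕ) (hk : 1 ≤ k) (B : Finset (ℝ × ℝ))
    (hB : ∀ p ∈ B, p.1 < p.2)
    (hdist : ∀ p ∈ B, ∀ q ∈ B, p ≠ q →
      p.1 ≠ q.1 ∧ p.1 ≠ q.2 ∧ p.2 ≠ q.1 ∧ p.2 ≠ q.2)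
    (f : ℝ × ℝ → Fin k)
    (hproper : ∀ p ∈ B, ∀ q ∈ B, f p = f q →
      Set.Icc p.1 p.2 ⊆ Set.Icc q.1 q.2 → p = q) :
    ∀ x ∈ B, ∀ y ∈ B,
      Set.Icc x.1 x.2 ⊆ Set.Icc y.1 y.2 ↔
      ∀ z : ℝ, (∃ p ∈ B, p.1 = z ∨ p.2 = z) →
        (relP f (.inl z) (.inr y) → relP f (.inl z) (.inr x)) ∧
        (relP f (.inr y) (.inl z) → relP f (.inr x) (.inl z)) := by
  intro x hx y hy
  constructor
  · intro hsub z _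
    obtain ⟨h1, h2⟩ := (Set.Icc_subset_Icc_iff (hB x hx).le).mp hsub
    simp only [relP]
    exact ⟨fun h => h.trans h1, fun h => h2.trans h⟩
  · intro h
    obtain ⟨h1, -⟩ := h y.1 ⟨y, hy, Or.inl rfl⟩
    obtain ⟨-, h2⟩ := h y.2 ⟨y, hy, Or.inr rfl⟩
    simp only [relP] at h1 h2
    exact Set.Icc_subset_Icc (h1 le_rfl) (h2 le_rfl)
end

section
/- Let k ≥ 1 and let G be a simple graph whose vertex set V is partitioned into sets V_1, V_2, ..., V_r, each of size m, with m > 6kr. Assume that V_i is gradually connected with V_{i+1} for i = 1, ..., r-1, and that there exists a set I ⊆ {1, ..., r-1} with |I| = 2k such that for every transversal X of the set system {V_i : i ∈ I} and every transversal Y of {V_{i+1} : i ∈ I}, the set X is gradually connected to Y. Then for every vertex subset W ⊆ V with rm/3 ≤ |W| ≤ 2rm/3, there exist k vertices in W whose neighbourhoods in V \ W are pairwise distinct (i.e., k vertices u_1, ..., u_k ∈ W such that the sets {v ∈ V \ W : v adjacent to u_s}, s = 1, ..., k, are pairwise distinct). -/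
/-- `X` is gradually connected with `Y` in `G`: there are orderings
`X = {x 0, …, x (m-1)}` and `Y = {y 0, …, y (m-1)}` (where `m = |X| = |Y|`) such that
for all `i < j`, `x j` is adjacent to `y i` while `x i` is not adjacent to `y j`. -/
def GraduallyConnected {V : Type*} (G : SimpleGraph V) (X Y : Finset V) : Prop :=
  X.card = Y.card ∧
  ∃ x y : Fin X.card → V,
    Function.Injective x ∧ Function.Injective y ∧
    Set.range x = ↑X ∧ Set.range y = ↑Y ∧
    ∀ i j : Fin X.card, i < j → G.Adj (x j) (y i) ∧ ¬ G.Adj (x i) (y j)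

/-- `Z` is a transversal of the set system `{Vp i : i ∈ I}`: it consists of `|I|`
distinct elements, one from each `Vp i`, `i ∈ I`. -/
def IsTransversal {V : Type*} [DecidableEq V]
    (Vp : ℕ → Finset V) (I : Finset ℕ) (Z : Finset V) : Prop :=
  ∃ g : ℕ → V, (∀ i ∈ I, g i ∈ Vp i) ∧ Set.InjOn g ↑I ∧ Z = I.image g


section Helpers


variable {V : Type*} [Fintype V] [DecidableEq V]

lemma card_filter_comp {n : ℕ} (x : Fin n → V) (hinj : Function.Injective x)
    (X : Finset V) (hr : Set.range x = ↑X) (p : V → Prop) [DecidablePred p] :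
    (Finset.univ.filter fun i => p (x i)).card = (X.filter p).card := by
  rw [← Finset.card_image_of_injective (Finset.univ.filter fun i => p (x i)) hinj]
  congr 1
  ext v
  simp only [Finset.mem_image, Finset.mem_filter, Finset.mem_univ, true_and]
  constructor
  · rintro ⟨i, hp, rfl⟩
    refine ⟨?_, hp⟩
    have h1 : x i ∈ Set.range x := ⟨i, rfl⟩
    rw [hr] at h1
    exact_mod_cast h1
  · rintro ⟨hv, hp⟩
    have h1 : v ∈ Set.range x := by rw [hr]; exact_mod_cast hv
    obtain ⟨i, rfl⟩ := h1
    exact ⟨i, hp, rfl⟩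

lemma keyA (G : SimpleGraph V) (k : ℕ) (X Y W : Finset V)
    (h : GraduallyConnected G X Y)
    (hbig : X.card + 2 * k ≤
      (X.filter (fun v => v ∈ W)).card + (Y.filter (fun v => v ∉ W)).card) :
    ∃ u : Fin k → V, Function.Injective u ∧ (∀ s, u s ∈ W) ∧
      ∀ s t : Fin k, s ≠ t →
        {v : V | v ∉ W ∧ G.Adj v (u s)} ≠ {v : V | v ∉ W ∧ G.Adj v (u t)} := by
  classical
  obtain ⟨hXY, x, y, hxinj, hyinj, hxr, hyr, hadj⟩ := h
  have hAc : (Finset.univ.filter fun i => x i ∈ W).card = (X.filter (fun v => v ∈ W)).card :=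
    card_filter_comp x hxinj X hxr (fun v => v ∈ W)
  have hBc : (Finset.univ.filter fun i => y i ∉ W).card = (Y.filter (fun v => v ∉ W)).card :=
    card_filter_comp y hyinj Y hyr (fun v => v ∉ W)
  set A : Finset (Fin X.card) := Finset.univ.filter (fun i => x i ∈ W) with hA
  set B : Finset (Fin X.card) := Finset.univ.filter (fun i => y i ∉ W) with hB
  have hUB : (A ∪ B).card ≤ X.card := by
    calc (A ∪ B).card ≤ (Finset.univ : Finset (Fin X.card)).card := Finset.card_le_univ _
    _ = X.card := by simp
  have hC : 2 * k ≤ (A ∩ B).card := by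
    have := Finset.card_union_add_card_inter A B
    omega
  obtain ⟨C, hCsub, hCcard⟩ := Finset.exists_subset_card_eq hC
  set e := C.orderIsoOfFin hCcard with he
  set c : Fin (2*k) → Fin X.card := fun j => (e j : Fin X.card) with hc
  have hcmono : StrictMono c := fun a b hab => by
    exact_mod_cast e.strictMono hab
  have hcW : ∀ j, x (c j) ∈ W ∧ y (c j) ∉ W := by
    intro j
    have h1 : (c j) ∈ A ∩ B := hCsub (e j).2
    rw [Finset.mem_inter, hA, hB, Finset.mem_filter, Finset.mem_filter] at h1
    exact ⟨h1.1.2, h1.2.2⟩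
  refine ⟨fun s => x (c ⟨2 * s.val, by have := s.isLt; omega⟩), ?_, ?_, ?_⟩
  · intro s t hst
    have h1 := hxinj hst
    have h2 := hcmono.injective h1
    have h3 : 2 * s.val = 2 * t.val := congrArg Fin.val h2
    exact Fin.ext (by omega)
  · intro s; exact (hcW _).1
  · have key : ∀ s t : Fin k, s < t →
        ∃ v, v ∉ W ∧ G.Adj v (x (c ⟨2*t.val, by have := t.isLt; omega⟩)) ∧
          ¬ G.Adj v (x (c ⟨2*s.val, by have := s.isLt; omega⟩)) := by
      intro s t hst
      have hsk := s.isLt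
      have htk := t.isLt
      have hstv : s.val < t.val := hst
      refine ⟨y (c ⟨2*s.val+1, by omega⟩), (hcW _).2, ?_, ?_⟩
      · have h1 := (hadj (c ⟨2*s.val+1, by omega⟩) (c ⟨2*t.val, by omega⟩)
          (hcmono (by rw [Fin.lt_def]; simp; omega))).1
        exact h1.symm
      · have h1 := (hadj (c ⟨2*s.val, by omega⟩) (c ⟨2*s.val+1, by omega⟩)
          (hcmono (by rw [Fin.lt_def]; simp))).2
        intro hadj'
        exact h1 hadj'.symm
    intro s t hst heq
    rcases lt_or_gt_of_ne hst with hlt | hlt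
    · obtain ⟨v, hvW, hvt, hvs⟩ := key s t hlt
      have hmem : v ∈ {v : V | v ∉ W ∧ G.Adj v (x (c ⟨2*t.val, by have := t.isLt; omega⟩))} :=
        ⟨hvW, hvt⟩
      rw [← heq] at hmem
      exact hvs hmem.2
    · obtain ⟨v, hvW, hvt, hvs⟩ := key t s hlt
      have hmem : v ∈ {v : V | v ∉ W ∧ G.Adj v (x (c ⟨2*s.val, by have := s.isLt; omega⟩))} :=
        ⟨hvW, hvt⟩
      rw [heq] at hmem
      exact hvs hmem.2

lemma keyB (G : SimpleGraph V) (k : ℕ) (X Y W : Finset V)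
    (h : GraduallyConnected G X Y)
    (hbig : X.card + 2 * k ≤
      (X.filter (fun v => v ∉ W)).card + (Y.filter (fun v => v ∈ W)).card) :
    ∃ u : Fin k → V, Function.Injective u ∧ (∀ s, u s ∈ W) ∧
      ∀ s t : Fin k, s ≠ t →
        {v : V | v ∉ W ∧ G.Adj v (u s)} ≠ {v : V | v ∉ W ∧ G.Adj v (u t)} := by
  classical
  obtain ⟨hXY, x, y, hxinj, hyinj, hxr, hyr, hadj⟩ := h
  have hAc : (Finset.univ.filter fun i => x i ∉ W).card = (X.filter (fun v => v ∉ W)).card :=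
    card_filter_comp x hxinj X hxr (fun v => v ∉ W)
  have hBc : (Finset.univ.filter fun i => y i ∈ W).card = (Y.filter (fun v => v ∈ W)).card :=
    card_filter_comp y hyinj Y hyr (fun v => v ∈ W)
  set A : Finset (Fin X.card) := Finset.univ.filter (fun i => x i ∉ W) with hA
  set B : Finset (Fin X.card) := Finset.univ.filter (fun i => y i ∈ W) with hB
  have hUB : (A ∪ B).card ≤ X.card := by
    calc (A ∪ B).card ≤ (Finset.univ : Finset (Fin X.card)).card := Finset.card_le_univ _
    _ = X.card := by simp
  have hC : 2 * k ≤ (A ∩ B).card := by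
    have := Finset.card_union_add_card_inter A B
    omega
  obtain ⟨C, hCsub, hCcard⟩ := Finset.exists_subset_card_eq hC
  set e := C.orderIsoOfFin hCcard with he
  set c : Fin (2*k) → Fin X.card := fun j => (e j : Fin X.card) with hc
  have hcmono : StrictMono c := fun a b hab => by
    exact_mod_cast e.strictMono hab
  have hcW : ∀ j, x (c j) ∉ W ∧ y (c j) ∈ W := by
    intro j
    have h1 : (c j) ∈ A ∩ B := hCsub (e j).2
    rw [Finset.mem_inter, hA, hB, Finset.mem_filter, Finset.mem_filter] at h1
    exact ⟨h1.1.2, h1.2.2⟩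
  refine ⟨fun s => y (c ⟨2 * s.val + 1, by have := s.isLt; omega⟩), ?_, ?_, ?_⟩
  · intro s t hst
    have h1 := hyinj hst
    have h2 := hcmono.injective h1
    have h3 : 2 * s.val + 1 = 2 * t.val + 1 := congrArg Fin.val h2
    exact Fin.ext (by omega)
  · intro s; exact (hcW _).2
  · have key : ∀ s t : Fin k, s < t →
        ∃ v, v ∉ W ∧ G.Adj v (y (c ⟨2*s.val+1, by have := s.isLt; omega⟩)) ∧
          ¬ G.Adj v (y (c ⟨2*t.val+1, by have := t.isLt; omega⟩)) := by
      intro s t hst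
      have hsk := s.isLt
      have htk := t.isLt
      have hstv : s.val < t.val := hst
      refine ⟨x (c ⟨2*t.val, by omega⟩), (hcW _).1, ?_, ?_⟩
      · exact (hadj (c ⟨2*s.val+1, by omega⟩) (c ⟨2*t.val, by omega⟩)
          (hcmono (by rw [Fin.lt_def]; simp; omega))).1
      · exact (hadj (c ⟨2*t.val, by omega⟩) (c ⟨2*t.val+1, by omega⟩)
          (hcmono (by rw [Fin.lt_def]; simp))).2
    intro s t hst heq
    rcases lt_or_gt_of_ne hst with hlt | hlt
    · obtain ⟨v, hvW, hvs, hvt⟩ := key s t hlt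
      have hmem : v ∈ {v : V | v ∉ W ∧ G.Adj v (y (c ⟨2*s.val+1, by have := s.isLt; omega⟩))} :=
        ⟨hvW, hvs⟩
      rw [heq] at hmem
      exact hvt hmem.2
    · obtain ⟨v, hvW, hvs, hvt⟩ := key t s hlt
      have hmem : v ∈ {v : V | v ∉ W ∧ G.Adj v (y (c ⟨2*t.val+1, by have := t.isLt; omega⟩))} :=
        ⟨hvW, hvs⟩
      rw [← heq] at hmem
      exact hvt hmem.2

end Helpers


lemma levels_pos (k r m : ℕ) (hk : 1 ≤ k) (hr : 1 ≤ r) (hm : 6*k*r < m)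
    (w d : ℕ → ℕ) (hwd : ∀ i, 1 ≤ i → i ≤ r → w i + d i = m)
    (hstep : ∀ i, 1 ≤ i → i+1 ≤ r → w (i+1) ≤ w i + 2*k ∧ w i ≤ w (i+1) + 2*k)
    (Wc : ℕ) (hWc : Wc = ∑ i ∈ Finset.Icc 1 r, w i)
    (h1 : r*m ≤ 3*Wc) (h2 : 3*Wc ≤ 2*(r*m)) :
    ∀ i, 1 ≤ i → i ≤ r → 1 ≤ w i ∧ 1 ≤ d i := by
  have hprop : ∀ e i, 1 ≤ i → i + e ≤ r →
      w (i+e) ≤ w i + 2*k*e ∧ w i ≤ w (i+e) + 2*k*e := by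
    intro e
    induction e with
    | zero => intro i h1' h2'; simp
    | succ e ih =>
      intro i h1' h2'
      have ha := ih i h1' (by omega)
      have hb := hstep (i+e) (by omega) (by omega)
      have hc : 2*k*(e+1) = 2*k*e + 2*k := by ring
      have hd : i + (e+1) = (i+e) + 1 := by ring
      rw [hd, hc]
      generalize 2*k*e = Q at ha ⊢
      omega
  have hpair : ∀ i j, 1 ≤ i → i ≤ r → 1 ≤ j → j ≤ r → w i ≤ w j + 2*(k*r) := by
    intro i j hi1 hir hj1 hjr
    rcases le_total j i with h | h
    · have h3 := (hprop (i - j) j hj1 (by omega)).1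
      rw [show j + (i-j) = i from by omega] at h3
      refine h3.trans (Nat.add_le_add_left ?_ _)
      calc 2*k*(i-j) ≤ 2*k*r := mul_le_mul_right (by omega) _
        _ = 2*(k*r) := by ring
    · have h3 := (hprop (j - i) i hi1 (by omega)).2
      rw [show i + (j-i) = j from by omega] at h3
      refine h3.trans (Nat.add_le_add_left ?_ _)
      calc 2*k*(j-i) ≤ 2*k*r := mul_le_mul_right (by omega) _
        _ = 2*(k*r) := by ring
  have hne : (Finset.Icc 1 r).Nonempty := by
    rw [Finset.nonempty_Icc]; omega
  have hheavy : ∃ i0, 1 ≤ i0 ∧ i0 ≤ r ∧ m ≤ 3 * w i0 := by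
    by_contra hcon
    push_neg at hcon
    have hlt : ∑ i ∈ Finset.Icc 1 r, 3 * w i < ∑ i ∈ Finset.Icc 1 r, m := by
      refine Finset.sum_lt_sum_of_nonempty hne ?_
      intro i hi
      rw [Finset.mem_Icc] at hi
      exact hcon i hi.1 hi.2
    rw [Finset.sum_const, Nat.card_Icc, Nat.add_sub_cancel, ← Finset.mul_sum, ← hWc,
      smul_eq_mul] at hlt
    omega
  have hsum : (∑ i ∈ Finset.Icc 1 r, w i) + (∑ i ∈ Finset.Icc 1 r, d i) = r * m := by
    have h3 : ∑ i ∈ Finset.Icc 1 r, (w i + d i) = ∑ i ∈ Finset.Icc 1 r, m :=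
      Finset.sum_congr rfl (fun i hi => by rw [Finset.mem_Icc] at hi; exact hwd i hi.1 hi.2)
    rw [Finset.sum_add_distrib, Finset.sum_const, Nat.card_Icc, Nat.add_sub_cancel,
      smul_eq_mul] at h3
    exact h3
  have hlight : ∃ j0, 1 ≤ j0 ∧ j0 ≤ r ∧ m ≤ 3 * d j0 := by
    by_contra hcon
    push_neg at hcon
    have hlt : ∑ i ∈ Finset.Icc 1 r, 3 * d i < ∑ i ∈ Finset.Icc 1 r, m := by
      refine Finset.sum_lt_sum_of_nonempty hne ?_
      intro i hi
      rw [Finset.mem_Icc] at hi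
      exact hcon i hi.1 hi.2
    rw [Finset.sum_const, Nat.card_Icc, Nat.add_sub_cancel, ← Finset.mul_sum,
      smul_eq_mul] at hlt
    omega
  obtain ⟨i0, hi01, hi0r, hi0m⟩ := hheavy
  obtain ⟨j0, hj01, hj0r, hj0m⟩ := hlight
  intro i hi1 hir
  have e1 := hwd j0 hj01 hj0r
  have e2 := hwd i hi1 hir
  have p1 := hpair i0 i hi01 hi0r hi1 hir
  have p2 := hpair i j0 hi1 hir hj01 hj0r
  have hm' : 6*(k*r) < m := by
    rw [show 6*(k*r) = 6*k*r from by ring]; exact hm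
  set T := k*r with hT
  omega

/-- Let the vertex set of `G` be partitioned into `Vp 1, …, Vp r`,
each of size `m > 6kr`, with `Vp i` gradually connected with `Vp (i+1)`, and suppose
there is `I ⊆ {1, …, r-1}` of size `2k` such that every transversal of
`{Vp i : i ∈ I}` is gradually connected to every transversal of `{Vp (i+1) : i ∈ I}`.
Then every vertex set `W` with `rm/3 ≤ |W| ≤ 2rm/3` contains `k` vertices whose
neighbourhoods outside `W` are pairwise distinct. -/
theorem gradually_connected_partition_distinct_outside_neighbourhoods
    {V : Type*} [Fintype V] [DecidableEq V]
    (G : SimpleGraph V) (k r m : ℕ) (hk : 1 ≤ k)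
    (Vp : ℕ → Finset V)
    (hcard : ∀ i ∈ Finset.Icc 1 r, (Vp i).card = m)
    (hpart : ∀ v : V, ∃! i, i ∈ Finset.Icc 1 r ∧ v ∈ Vp i)
    (hm : 6 * k * r < m)
    (hgrad : ∀ i : ℕ, 1 ≤ i → i < r → GraduallyConnected G (Vp i) (Vp (i + 1)))
    (I : Finset ℕ) (hI : I ⊆ Finset.Icc 1 (r - 1)) (hIcard : I.card = 2 * k)
    (htrans : ∀ X Y : Finset V, IsTransversal Vp I X →
      IsTransversal Vp (I.image (· + 1)) Y → GraduallyConnected G X Y)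
    (W : Finset V) (hW₁ : r * m ≤ 3 * W.card) (hW₂ : 3 * W.card ≤ 2 * (r * m)) :
    ∃ u : Fin k → V, Function.Injective u ∧ (∀ s, u s ∈ W) ∧
      ∀ s t : Fin k, s ≠ t →
        {v : V | v ∉ W ∧ G.Adj v (u s)} ≠ {v : V | v ∉ W ∧ G.Adj v (u t)} := by
  classical
  have hr2 : 2 ≤ r := by
    have hIne : I.Nonempty := Finset.card_pos.mp (by omega)
    obtain ⟨i, hi⟩ := hIne
    have h1 := hI hi
    rw [Finset.mem_Icc] at h1
    omega
  have hr1 : 1 ≤ r := by omega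
  by_cases hcase : ∃ i, 1 ≤ i ∧ i + 1 ≤ r ∧
      (m + 2*k ≤ ((Vp i).filter (fun v => v ∈ W)).card +
          ((Vp (i+1)).filter (fun v => v ∉ W)).card ∨
       m + 2*k ≤ ((Vp i).filter (fun v => v ∉ W)).card +
          ((Vp (i+1)).filter (fun v => v ∈ W)).card)
  · obtain ⟨i, hi1, hir, hor⟩ := hcase
    have hgi := hgrad i hi1 (by omega)
    have hXm : (Vp i).card = m := hcard i (by rw [Finset.mem_Icc]; omega)
    rcases hor with h | h
    · exact keyA G k (Vp i) (Vp (i+1)) W hgi (by rw [hXm]; exact h)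
    · exact keyB G k (Vp i) (Vp (i+1)) W hgi (by rw [hXm]; exact h)
  · push_neg at hcase
    have hwd : ∀ i, 1 ≤ i → i ≤ r →
        ((Vp i).filter (fun v => v ∈ W)).card + ((Vp i).filter (fun v => v ∉ W)).card = m := by
      intro i h1 h2
      have h3 := Finset.card_filter_add_card_filter_not (s := Vp i)
        (p := fun v => v ∈ W)
      rw [hcard i (by rw [Finset.mem_Icc]; omega)] at h3
      exact h3
    have hstep : ∀ i, 1 ≤ i → i + 1 ≤ r →
        ((Vp (i+1)).filter (fun v => v ∈ W)).card ≤
          ((Vp i).filter (fun v => v ∈ W)).card + 2*k ∧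
        ((Vp i).filter (fun v => v ∈ W)).card ≤
          ((Vp (i+1)).filter (fun v => v ∈ W)).card + 2*k := by
      intro i h1 h2
      have h3 := hcase i h1 h2
      have e1 := hwd i h1 (by omega)
      have e2 := hwd (i+1) (by omega) h2
      omega
    have hdisj : ∀ i, i ∈ Finset.Icc 1 r → ∀ j, j ∈ Finset.Icc 1 r → i ≠ j →
        ∀ v : V, v ∈ Vp i → v ∈ Vp j → False := by
      intro i hi j hj hij v hvi hvj
      obtain ⟨i', hu, huniq⟩ := hpart v
      exact hij ((huniq i ⟨hi, hvi⟩).trans (huniq j ⟨hj, hvj⟩).symm)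
    have hWeq : W = (Finset.Icc 1 r).biUnion (fun i => (Vp i).filter (fun v => v ∈ W)) := by
      ext v
      simp only [Finset.mem_biUnion, Finset.mem_filter]
      constructor
      · intro hv
        obtain ⟨i, ⟨hi, hvi⟩, -⟩ := hpart v
        exact ⟨i, hi, hvi, hv⟩
      · rintro ⟨i, -, -, hv⟩
        exact hv
    have hWcard : W.card = ∑ i ∈ Finset.Icc 1 r, ((Vp i).filter (fun v => v ∈ W)).card := by
      conv_lhs => rw [hWeq]
      refine Finset.card_biUnion ?_
      intro i hi j hj hij
      rw [Function.onFun, Finset.disjoint_left]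
      intro v hvi hvj
      rw [Finset.mem_filter] at hvi hvj
      exact hdisj i hi j hj hij v hvi.1 hvj.1
    have hbnd := levels_pos k r m hk hr1 hm
      (fun i => ((Vp i).filter (fun v => v ∈ W)).card)
      (fun i => ((Vp i).filter (fun v => v ∉ W)).card)
      hwd hstep W.card hWcard hW₁ hW₂
    have hne1 : ((Vp 1).filter (fun v => v ∈ W)).Nonempty :=
      Finset.card_pos.mp ((hbnd 1 le_rfl hr1).1)
    have hVne : Nonempty V := ⟨hne1.choose⟩
    set g : ℕ → V := fun i =>
      if h : ((Vp i).filter (fun v => v ∈ W)).Nonempty then h.choose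
      else Classical.choice hVne with hgdef
    set g' : ℕ → V := fun i =>
      if h : ((Vp i).filter (fun v => v ∉ W)).Nonempty then h.choose
      else Classical.choice hVne with hg'def
    have hg : ∀ i, 1 ≤ i → i ≤ r → g i ∈ Vp i ∧ g i ∈ W := by
      intro i h1 h2
      have hne : ((Vp i).filter (fun v => v ∈ W)).Nonempty :=
        Finset.card_pos.mp ((hbnd i h1 h2).1)
      have h3 : g i = hne.choose := by rw [hgdef]; exact dif_pos hne
      have h4 := hne.choose_spec
      rw [Finset.mem_filter] at h4
      rw [h3]
      exact h4
    have hg' : ∀ i, 1 ≤ i → i ≤ r → g' i ∈ Vp i ∧ g' i ∉ W := by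
      intro i h1 h2
      have hne : ((Vp i).filter (fun v => v ∉ W)).Nonempty :=
        Finset.card_pos.mp ((hbnd i h1 h2).2)
      have h3 : g' i = hne.choose := by rw [hg'def]; exact dif_pos hne
      have h4 := hne.choose_spec
      rw [Finset.mem_filter] at h4
      rw [h3]
      exact h4
    have hIr : ∀ i ∈ I, 1 ≤ i ∧ i ≤ r := by
      intro i hi
      have h1 := hI hi
      rw [Finset.mem_Icc] at h1
      omega
    have hJr : ∀ j ∈ I.image (· + 1), 1 ≤ j ∧ j ≤ r := by
      intro j hj
      rw [Finset.mem_image] at hj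
      obtain ⟨i, hi, rfl⟩ := hj
      have h1 := hI hi
      rw [Finset.mem_Icc] at h1
      omega
    have hginj : Set.InjOn g ↑I := by
      intro a ha b hb hab
      rw [Finset.mem_coe] at ha hb
      by_contra hne
      have hA := hg a (hIr a ha).1 (hIr a ha).2
      have hB := hg b (hIr b hb).1 (hIr b hb).2
      exact hdisj a (by rw [Finset.mem_Icc]; exact hIr a ha)
        b (by rw [Finset.mem_Icc]; exact hIr b hb)
        hne (g a) hA.1 (by rw [hab]; exact hB.1)
    have hg'inj : Set.InjOn g' ↑(I.image (· + 1)) := by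
      intro a ha b hb hab
      rw [Finset.mem_coe] at ha hb
      by_contra hne
      have hA := hg' a (hJr a ha).1 (hJr a ha).2
      have hB := hg' b (hJr b hb).1 (hJr b hb).2
      exact hdisj a (by rw [Finset.mem_Icc]; exact hJr a ha)
        b (by rw [Finset.mem_Icc]; exact hJr b hb)
        hne (g' a) hA.1 (by rw [hab]; exact hB.1)
    set X := I.image g with hX
    set Y := (I.image (· + 1)).image g' with hY
    have t1 : IsTransversal Vp I X :=
      ⟨g, fun i hi => (hg i (hIr i hi).1 (hIr i hi).2).1, hginj, rfl⟩
    have t2 : IsTransversal Vp (I.image (· + 1)) Y :=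
      ⟨g', fun i hi => (hg' i (hJr i hi).1 (hJr i hi).2).1, hg'inj, rfl⟩
    have grad := htrans X Y t1 t2
    have hXcard : X.card = 2*k := by
      rw [hX, Finset.card_image_of_injOn hginj, hIcard]
    have hYcard : Y.card = 2*k := by
      rw [hY, Finset.card_image_of_injOn hg'inj,
        Finset.card_image_of_injective _ (add_left_injective 1), hIcard]
    have hXW : X.filter (fun v => v ∈ W) = X := by
      refine Finset.filter_true_of_mem ?_
      intro v hv
      rw [hX, Finset.mem_image] at hv
      obtain ⟨i, hi, rfl⟩ := hv
      exact (hg i (hIr i hi).1 (hIr i hi).2).2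
    have hYW : Y.filter (fun v => v ∉ W) = Y := by
      refine Finset.filter_true_of_mem ?_
      intro v hv
      rw [hY, Finset.mem_image] at hv
      obtain ⟨i, hi, rfl⟩ := hv
      exact (hg' i (hJr i hi).1 (hJr i hi).2).2
    refine keyA G k X Y W grad ?_
    rw [hXW, hYW, hXcard, hYcard]
end

section
/- Let n ≥ 1 and let i, j, l be integers with 1 ≤ i < j ≤ n and 1 ≤ l ≤ n. In the real plane, the closed line segment from (i - 1/2, 0) to (j + 1/2, 1) and the closed line segment from (l, 0) to (l, 1) have a common point if and only if i ≤ l ≤ j. -/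
/-- For integers `1 ≤ i < j ≤ n` and `1 ≤ l ≤ n`, the closed segment
from `(i - 1/2, 0)` to `(j + 1/2, 1)` and the vertical closed segment from `(l, 0)` to
`(l, 1)` have a common point if and only if `i ≤ l ≤ j`. -/
theorem permutation_segment_meets_vertical_iff
    (n : ℤ) (hn : 1 ≤ n) (i j l : ℤ)
    (hi : 1 ≤ i) (hij : i < j) (hj : j ≤ n) (hl : 1 ≤ l) (hln : l ≤ n) :
    (segment ℝ (((i : ℝ) - 1 / 2, 0) : ℝ × ℝ) (((j : ℝ) + 1 / 2, 1) : ℝ × ℝ) ∩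
      segment ℝ (((l : ℝ), 0) : ℝ × ℝ) (((l : ℝ), 1) : ℝ × ℝ)).Nonempty ↔
    i ≤ l ∧ l ≤ j := by
  have hijR : (i : ℝ) < (j : ℝ) := by exact_mod_cast hij
  constructor
  · rintro ⟨p, hp1, hp2⟩
    rw [segment_eq_image] at hp1 hp2
    obtain ⟨t, ht, hpt⟩ := hp1
    obtain ⟨s, hs, hps⟩ := hp2
    have h1 : (1 - t) * ((i : ℝ) - 1 / 2) + t * ((j : ℝ) + 1 / 2) = p.1 := by
      have := congrArg Prod.fst hpt
      simpa using this
    have h2 : (l : ℝ) = p.1 := by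
      have := congrArg Prod.fst hps
      simp at this
      linear_combination this
    have hlo : (i : ℝ) - 1 / 2 ≤ (l : ℝ) := by
      rw [h2, ← h1]
      nlinarith [ht.1, ht.2]
    have hhi : (l : ℝ) ≤ (j : ℝ) + 1 / 2 := by
      rw [h2, ← h1]
      nlinarith [ht.1, ht.2]
    constructor
    · by_contra h
      push_neg at h
      have : (l : ℝ) ≤ (i : ℝ) - 1 := by exact_mod_cast (by omega : l ≤ i - 1)
      linarith
    · by_contra h
      push_neg at h
      have : (j : ℝ) + 1 ≤ (l : ℝ) := by exact_mod_cast (by omega : j + 1 ≤ l)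
      linarith
  · rintro ⟨h1, h2⟩
    have h1R : (i : ℝ) ≤ l := by exact_mod_cast h1
    have h2R : (l : ℝ) ≤ j := by exact_mod_cast h2
    have hd : (0 : ℝ) < (j : ℝ) - i + 1 := by linarith
    set t : ℝ := ((l : ℝ) - i + 1 / 2) / ((j : ℝ) - i + 1) with htdef
    have ht0 : 0 ≤ t := by
      apply div_nonneg _ hd.le; linarith
    have ht1 : t ≤ 1 := by
      rw [htdef, div_le_one hd]; linarith
    have hkey : (1 - t) * ((i : ℝ) - 1 / 2) + t * ((j : ℝ) + 1 / 2) = (l : ℝ) := by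
      have : t * ((j : ℝ) - i + 1) = (l : ℝ) - i + 1 / 2 := by
        rw [htdef]; field_simp
      nlinarith [this]
    refine ⟨((l : ℝ), t), ?_, ?_⟩
    · rw [segment_eq_image]
      refine ⟨t, ⟨ht0, ht1⟩, ?_⟩
      simp only [Prod.ext_iff, Prod.fst, Prod.snd]
      constructor
      · simpa using hkey
      · simp
    · rw [segment_eq_image]
      exact ⟨t, ⟨ht0, ht1⟩, by simp [Prod.ext_iff]; ring⟩
end

section
/- Let n ≥ 1 be an integer and δ a real number with 0 < δ and n·δ ≤ 1. Let i, j, l be integers with 1 ≤ i < j ≤ n and 1 ≤ l ≤ n. Consider the axis-parallel unit square B_l = [lδ, lδ + 1] × [(n - l)δ, (n - l)δ + 1] and the axis-parallel unit square N = [X, X + 1] × [Y, Y + 1] with X = 1 + iδ - δ/2 and Y = 1 + (n - j)δ - δ/2, both as subsets of ℝ² (products of closed intervals). Then B_l ∩ N ≠ ∅ if and only if i ≤ l ≤ j. -/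
/-- Let `0 < δ` with `n·δ ≤ 1` and let `1 ≤ i < j ≤ n`, `1 ≤ l ≤ n`.
The axis-parallel unit square `B_l = [lδ, lδ+1] × [(n-l)δ, (n-l)δ+1]` meets the
axis-parallel unit square `N = [X, X+1] × [Y, Y+1]`, where `X = 1 + iδ - δ/2` and
`Y = 1 + (n-j)δ - δ/2`, if and only if `i ≤ l ≤ j`. -/
theorem unitBox_consecutive_neighbourhood
    (n : ℤ) (hn : 1 ≤ n) (δ : ℝ) (hδ : 0 < δ) (hnδ : (n : ℝ) * δ ≤ 1)
    (i j l : ℤ) (hi : 1 ≤ i) (hij : i < j) (hj : j ≤ n) (hl : 1 ≤ l) (hln : l ≤ n) :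
    ((Set.Icc ((l : ℝ) * δ) ((l : ℝ) * δ + 1) ×ˢ
        Set.Icc (((n : ℝ) - (l : ℝ)) * δ) (((n : ℝ) - (l : ℝ)) * δ + 1)) ∩
      (Set.Icc (1 + (i : ℝ) * δ - δ / 2) ((1 + (i : ℝ) * δ - δ / 2) + 1) ×ˢ
        Set.Icc (1 + ((n : ℝ) - (j : ℝ)) * δ - δ / 2)
          ((1 + ((n : ℝ) - (j : ℝ)) * δ - δ / 2) + 1))).Nonempty ↔
    i ≤ l ∧ l ≤ j := by
  have hiR : (1 : ℝ) ≤ (i : ℝ) := by exact_mod_cast hi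
  have hjR : (j : ℝ) ≤ (n : ℝ) := by exact_mod_cast hj
  have hlR : (1 : ℝ) ≤ (l : ℝ) := by exact_mod_cast hl
  have hlnR : (l : ℝ) ≤ (n : ℝ) := by exact_mod_cast hln
  have hiN : (i : ℝ) ≤ (n : ℝ) := by exact_mod_cast hij.le.trans hj
  have hjR1 : (1 : ℝ) ≤ (j : ℝ) := by exact_mod_cast hi.trans hij.le
  rw [Set.prod_inter_prod, Set.prod_nonempty_iff, Set.Icc_inter_Icc,
    Set.Icc_inter_Icc, Set.nonempty_Icc, Set.nonempty_Icc]
  simp only [max_le_iff, le_min_iff]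
  constructor
  · rintro ⟨⟨⟨-, h2⟩, -, h4⟩, ⟨-, hx⟩, -, hy⟩
    constructor
    · -- from h2 : 1 + iδ - δ/2 ≤ lδ + 1, get i ≤ l
      by_contra h
      push_neg at h
      have : (l : ℝ) ≤ (i : ℝ) - 1 := by exact_mod_cast Int.le_sub_one_of_lt h
      nlinarith [hx, hy, h2, h4]
    · -- from h4 : 1 + (n-j)δ - δ/2 ≤ (n-l)δ + 1, get l ≤ j
      by_contra h
      push_neg at h
      have : (j : ℝ) ≤ (l : ℝ) - 1 := by exact_mod_cast Int.le_sub_one_of_lt h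
      nlinarith
  · rintro ⟨h1, h2⟩
    have h1R : (i : ℝ) ≤ (l : ℝ) := by exact_mod_cast h1
    have h2R : (l : ℝ) ≤ (j : ℝ) := by exact_mod_cast h2
    refine ⟨⟨⟨?_, ?_⟩, ?_, ?_⟩, ⟨?_, ?_⟩, ?_, ?_⟩ <;> nlinarith
end

section
/- Let n ≥ 1 be an integer and δ a real number with 0 < δ and (n + 1)δ < π. Let i, j, l be integers with 1 ≤ i < j ≤ n and 1 ≤ l ≤ n. Then the closed interval [lδ, π + lδ] is disjoint from the set [0, iδ - δ/2] ∪ [π + jδ + δ/2, 2π) if and only if i ≤ l ≤ j. -/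
open Real

/-- Let `0 < δ` with `(n+1)·δ < π`, and let `1 ≤ i < j ≤ n`,
`1 ≤ l ≤ n`. The arc `s_l = [lδ, π + lδ]` is disjoint from the arc through `0`
`n_{i,j} = [0, iδ - δ/2] ∪ [π + jδ + δ/2, 2π)` if and only if `i ≤ l ≤ j`. -/
theorem circularArc_complement_consecutive_neighbourhood
    (n : ℤ) (hn : 1 ≤ n) (δ : ℝ) (hδ : 0 < δ) (hnδ : ((n : ℝ) + 1) * δ < π)
    (i j l : ℤ) (hi : 1 ≤ i) (hij : i < j) (hj : j ≤ n) (hl : 1 ≤ l) (hln : l ≤ n) :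
    Set.Icc ((l : ℝ) * δ) (π + (l : ℝ) * δ) ∩
      (Set.Icc 0 ((i : ℝ) * δ - δ / 2) ∪
        Set.Ico (π + (j : ℝ) * δ + δ / 2) (2 * π)) = ∅ ↔
    i ≤ l ∧ l ≤ j := by
  have hmul : ∀ a b : ℝ, a ≤ b → a * δ ≤ b * δ := fun a b h =>
    mul_le_mul_of_nonneg_right h hδ.le
  have hl1 : (1 : ℝ) ≤ (l : ℝ) := by exact_mod_cast hl
  have hi1 : (1 : ℝ) ≤ (i : ℝ) := by exact_mod_cast hi
  have hj1 : (1 : ℝ) ≤ (j : ℝ) := by exact_mod_cast (le_trans hi hij.le)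
  have hlnR : (l : ℝ) ≤ (n : ℝ) := by exact_mod_cast hln
  have hjnR : (j : ℝ) ≤ (n : ℝ) := by exact_mod_cast hj
  have hlδ : δ ≤ (l : ℝ) * δ := by simpa using hmul 1 _ hl1
  have hiδ : δ ≤ (i : ℝ) * δ := by simpa using hmul 1 _ hi1
  have hjδ : δ ≤ (j : ℝ) * δ := by simpa using hmul 1 _ hj1
  have hlnδ : (l : ℝ) * δ ≤ (n : ℝ) * δ := hmul _ _ hlnR
  have hjnδ : (j : ℝ) * δ ≤ (n : ℝ) * δ := hmul _ _ hjnR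
  have hpi : 0 < π := by nlinarith
  have hnπ : (n : ℝ) * δ < π - δ := by nlinarith
  constructor
  · intro h
    constructor
    · by_contra hli
      push_neg at hli
      have h1 : (l : ℝ) + 1 ≤ (i : ℝ) := by exact_mod_cast hli
      have h2 : (l : ℝ) * δ + δ ≤ (i : ℝ) * δ := by
        have := hmul _ _ h1; linarith [this]
      have : (l : ℝ) * δ ∈ (∅ : Set ℝ) := by
        rw [← h]
        exact ⟨⟨le_refl _, by linarith⟩, Or.inl ⟨by linarith, by linarith⟩⟩
      exact this
    · by_contra hlj
      push_neg at hlj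
      have h1 : (j : ℝ) + 1 ≤ (l : ℝ) := by exact_mod_cast hlj
      have h2 : (j : ℝ) * δ + δ ≤ (l : ℝ) * δ := by
        have := hmul _ _ h1; linarith [this]
      have : (π + (j : ℝ) * δ + δ / 2) ∈ (∅ : Set ℝ) := by
        rw [← h]
        exact ⟨⟨by linarith, by linarith⟩, Or.inr ⟨le_refl _, by linarith⟩⟩
      exact this
  · rintro ⟨hil, hlj⟩
    have hilR : (i : ℝ) ≤ (l : ℝ) := by exact_mod_cast hil
    have hljR : (l : ℝ) ≤ (j : ℝ) := by exact_mod_cast hlj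
    have hilδ : (i : ℝ) * δ ≤ (l : ℝ) * δ := hmul _ _ hilR
    have hljδ : (l : ℝ) * δ ≤ (j : ℝ) * δ := hmul _ _ hljR
    rw [Set.eq_empty_iff_forall_notMem]
    rintro x ⟨⟨hx1, hx2⟩, hA | hB⟩
    · rcases hA with ⟨_, hA2⟩
      linarith
    · rcases hB with ⟨hB1, _⟩
      linarith
end

section
/- Let m ≥ 1 be an integer and let ε, δ be real numbers with 0 < ε, m·ε ≤ 1, and 0 < δ < 1. For integers 1 ≤ i, j ≤ m, consider the axis-parallel unit squares S_i = [iε, iε + 1] × [iε, iε + 1] and T_j = [1 + jε, 2 + jε] × [δ + jε, 1 + δ + jε] as subsets of ℝ² (products of closed intervals). Then S_i ∩ T_j ≠ ∅ if and only if j ≤ i. -/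
/-- Let `0 < ε` with `m·ε ≤ 1` and `0 < δ < 1`, and let
`1 ≤ i, j ≤ m`. The axis-parallel unit square `S_i = [iε, iε+1] × [iε, iε+1]` meets the
axis-parallel unit square `T_j = [1+jε, 2+jε] × [δ+jε, 1+δ+jε]` if and only if
`j ≤ i`. -/
theorem unitBox_gradual_connectivity
    (m : ℤ) (hm : 1 ≤ m) (ε δ : ℝ) (hε : 0 < ε) (hmε : (m : ℝ) * ε ≤ 1)
    (hδ₀ : 0 < δ) (hδ₁ : δ < 1)
    (i j : ℤ) (hi : 1 ≤ i) (him : i ≤ m) (hj : 1 ≤ j) (hjm : j ≤ m) :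
    ((Set.Icc ((i : ℝ) * ε) ((i : ℝ) * ε + 1) ×ˢ
        Set.Icc ((i : ℝ) * ε) ((i : ℝ) * ε + 1)) ∩
      (Set.Icc (1 + (j : ℝ) * ε) (2 + (j : ℝ) * ε) ×ˢ
        Set.Icc (δ + (j : ℝ) * ε) (1 + δ + (j : ℝ) * ε))).Nonempty ↔
    j ≤ i := by
  have hiε : (i : ℝ) * ε ≤ 1 := by
    calc (i : ℝ) * ε ≤ (m : ℝ) * ε := by
          apply mul_le_mul_of_nonneg_right _ hε.le
          exact_mod_cast him
      _ ≤ 1 := hmε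
  have hjε : 0 < (j : ℝ) * ε := by
    apply mul_pos _ hε
    exact_mod_cast hj
  constructor
  · rintro ⟨⟨x, y⟩, ⟨⟨_, hx2⟩, _⟩, ⟨hx3, _⟩, _⟩
    have : (j : ℝ) * ε ≤ (i : ℝ) * ε := by linarith
    have : (j : ℝ) ≤ (i : ℝ) := le_of_mul_le_mul_right this hε
    exact_mod_cast this
  · intro hji
    have hji' : (j : ℝ) * ε ≤ (i : ℝ) * ε := by
      apply mul_le_mul_of_nonneg_right _ hε.le
      exact_mod_cast hji
    refine ⟨(1 + (j : ℝ) * ε, max ((i : ℝ) * ε) (δ + (j : ℝ) * ε)), ⟨⟨?_, ?_⟩, ?_, ?_⟩, ⟨?_, ?_⟩, ?_, ?_⟩ <;> dsimp only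
    · linarith
    · linarith
    · exact le_max_left _ _
    · exact max_le (by linarith) (by linarith)
    · linarith
    · linarith
    · exact le_max_right _ _
    · exact max_le (by linarith) (by linarith)
end
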